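/- For every n ≥ 0, p_2(n) is even. (Conjugation π ↦ π' is a fixed-point-free involution on the set of partitions of n with srank ≡ 2 (mod 4), since srank(π') = −srank(π) and any self-conjugate partition has srank 0.) -/

import Mathlib

open scoped Classical

namespace AndrewsStanley

/-- `O(π)`: the number of odd parts of the partition `π`. -/
def numOdd {n : ℕ} (π : n.Partition) : ℕ := (π.parts.filter (fun j => Odd j)).card

/-- The length of the `i`-th column (`i ≥ 1`) of the Young diagram of `π`,
i.e. the `i`-th part of the conjugate partition `π'`. -/
def colLen {n : ℕ} (π : n.Partition) (i : ℕ) : ℕ := (π.parts.filter (fun j => i ≤ j)).card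

/-- `O(π')`: the number of odd parts of the conjugate partition `π'`.
(All parts of `π` are at most `n`, so all columns of the diagram have index in `[1, n]`.) -/
def numOddConj {n : ℕ} (π : n.Partition) : ℕ :=
  ((Finset.Icc 1 n).filter (fun i => Odd (colLen π i))).card

/-- Stanley's statistic `srank(π) = O(π) - O(π')`. -/
def srank {n : ℕ} (π : n.Partition) : ℤ := (numOdd π : ℤ) - (numOddConj π : ℤ)

/-- A partition has no repeated even parts. -/
def NoRepEven {n : ℕ} (π : n.Partition) : Prop := ∀ j : ℕ, Even j → π.parts.count j ≤ 1

/-- `p_i(N)`: the number of partitions of `N` with `srank ≡ i (mod 4)`. -/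
noncomputable def pMod (i : ℤ) (N : ℕ) : ℕ :=
  (Finset.univ.filter (fun π : N.Partition => srank π % 4 = i)).card

/-- The Andrews–Garvan crank, defined on a multiset of parts: the largest part if there
are no ones, and otherwise the number of parts larger than the number of ones minus
the number of ones. -/
def mcrank (s : Multiset ℕ) : ℤ :=
  if s.count 1 = 0 then (s.sup : ℤ)
  else ((s.filter (fun j => s.count 1 < j)).card : ℤ) - (s.count 1 : ℤ)

/-- The parts of the partition `π₁` in which `j` occurs `⌊f_{2j}(π)/2⌋` times. -/
def halfEvenParts {n : ℕ} (π : n.Partition) : Multiset ℕ :=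
  (Finset.Icc 1 n).val.bind (fun j => Multiset.replicate (π.parts.count (2 * j) / 2) j)

/-- The second largest part `λ₂` of a partition (counted with multiplicity; `0` if
there are fewer than two parts). -/
def secondPart {n : ℕ} (π : n.Partition) : ℕ := (π.parts.erase π.parts.sup).sup

/-- Partitions of type B: either `π = (3,1)`, or `|π| ≠ 4`, `λ₁ - λ₂ ≥ 2`,
`λ'₁ - λ'₂ ≥ 2`, `λ₁ - 2` and `λ₂` are not identical even integers, and `π` has no
repeated even parts. -/
def TypeB {n : ℕ} (π : n.Partition) : Prop :=
  π.parts = {3, 1} ∨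
    (n ≠ 4 ∧ secondPart π + 2 ≤ π.parts.sup ∧ colLen π 2 + 2 ≤ colLen π 1 ∧
      ¬(π.parts.sup = secondPart π + 2 ∧ Even (secondPart π)) ∧ NoRepEven π)

/-- `stcrank(π) = crank(π₁) + srank(π)/2 + Ψ(π)` where `Ψ(π) = 1` iff `π` is of type B. -/
noncomputable def stcrank {n : ℕ} (π : n.Partition) : ℤ :=
  mcrank (halfEvenParts π) + srank π / 2 + (if TypeB π then 1 else 0)

/-- `P_i(k, m, N)`: the number of partitions of `N` with `srank ≡ i (mod 4)` and
`stcrank ≡ k (mod m)`. -/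
noncomputable def Pcount (i k : ℤ) (m : ℕ) (N : ℕ) : ℕ :=
  (Finset.univ.filter
    (fun π : N.Partition => srank π % 4 = i ∧ stcrank π % (m : ℤ) = k)).card

/-- The parts of `π` listed in (weakly) decreasing order. -/
def partsList {n : ℕ} (π : n.Partition) : List ℕ := (π.parts.sort (· ≤ ·)).reverse

/-- `λ_a`, the length of the `a`-th row (`a ≥ 1`) of the Young diagram of `π`. -/
def rowLen {n : ℕ} (π : n.Partition) (a : ℕ) : ℕ := (partsList π).getD (a - 1) 0

/-- The hook length of the cell in row `a` and column `b` (both `1`-indexed). -/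
def hookLen {n : ℕ} (π : n.Partition) (a b : ℕ) : ℕ :=
  (rowLen π a - b) + (colLen π b - a) + 1

/-- A partition is a `t`-core if no hook length of its Young diagram equals `t`. -/
def IsCore (t : ℕ) {n : ℕ} (π : n.Partition) : Prop :=
  ∀ a b : ℕ, 1 ≤ a → 1 ≤ b → b ≤ rowLen π a → hookLen π a b ≠ t

/-- `a_t(N)`: the number of partitions of `N` that are `t`-cores. -/
noncomputable def coreCount (t N : ℕ) : ℕ :=
  (Finset.univ.filter (fun π : N.Partition => IsCore t π)).card

/-- `r_j(π)`: the number of cells in row `a`, column `b` (1-indexed) of the Young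
diagram of `π` with `b - a ≡ j (mod 5)`. -/
noncomputable def rres {n : ℕ} (π : n.Partition) (j : ℕ) : ℕ :=
  ∑ a ∈ Finset.Icc 1 (Multiset.card π.parts),
    ((Finset.Icc 1 (rowLen π a)).filter (fun b => ((b : ℤ) - (a : ℤ)) % 5 = (j : ℤ))).card

/-- The Garvan–Kim–Stanton 5-core crank (as a representative modulo 5):
`d₅(π) = 2 + 2r₀(π) + r₁(π) - r₃(π) - 2r₄(π)`. -/
noncomputable def d5 {n : ℕ} (π : n.Partition) : ℤ :=
  2 + 2 * (rres π 0 : ℤ) + (rres π 1 : ℤ) - (rres π 3 : ℤ) - 2 * (rres π 4 : ℤ)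

/-- `a_{5,i}(N)`: the number of 5-core partitions of `N` with `srank ≡ i (mod 4)`. -/
noncomputable def a5srank (i : ℤ) (N : ℕ) : ℕ :=
  (Finset.univ.filter (fun π : N.Partition => IsCore 5 π ∧ srank π % 4 = i)).card

/-- The infinite product `∏_{j≥0} f j` of power series, in the situation (as for all
the products occurring here) where the factor `f j` is of the form `1 + (terms of
degree > j)`, so that the coefficient of `q^N` in the partial products stabilizes:
it is the corresponding coefficient in `∏_{j ≤ N} f j`. -/
noncomputable def infProd {R : Type*} [CommRing R] (f : ℕ → PowerSeries R) :
    PowerSeries R :=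
  PowerSeries.mk fun N => PowerSeries.coeff (R := R) N (∏ j ∈ Finset.range (N + 1), f j)

end AndrewsStanley
section Aux

open Multiset Finset

/-- Column length function of a multiset of parts. -/
def cLen (s : Multiset ℕ) (i : ℕ) : ℕ := Multiset.countP (fun j => i ≤ j) s

/-- Conjugate multiset of parts (relative to a bound `n`). -/
def conjM (n : ℕ) (s : Multiset ℕ) : Multiset ℕ :=
  (((Finset.Icc 1 n).val.map (cLen s)).filter (fun x => 0 < x))

lemma cLen_antitone (s : Multiset ℕ) {i j : ℕ} (h : i ≤ j) : cLen s j ≤ cLen s i := by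
  rw [cLen, cLen, Multiset.countP_eq_card_filter, Multiset.countP_eq_card_filter]
  exact Multiset.card_le_card (Multiset.monotone_filter_right s (fun a ha => le_trans h ha))

lemma cLen_le_card (s : Multiset ℕ) (i : ℕ) : cLen s i ≤ Multiset.card s :=
  Multiset.countP_le_card _ _

lemma card_conjM_le (n : ℕ) (s : Multiset ℕ) : Multiset.card (conjM n s) ≤ n := by
  unfold conjM
  calc Multiset.card _ ≤ Multiset.card ((Finset.Icc 1 n).val.map (cLen s)) :=
        Multiset.card_le_card (Multiset.filter_le _ _)
    _ = n := by simp

lemma cLen_conjM (n : ℕ) (s : Multiset ℕ) {k : ℕ} (hk : 1 ≤ k) :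
    cLen (conjM n s) k = ((Finset.Icc 1 n).filter (fun i => k ≤ cLen s i)).card := by
  unfold cLen conjM
  rw [Multiset.countP_filter]
  rw [Multiset.countP_congr rfl (fun a _ => show (k ≤ a ∧ 0 < a) = (k ≤ a) by
    simp only [eq_iff_iff, and_iff_left_iff_imp]; omega)]
  rw [Multiset.countP_map]
  rfl

lemma galois (s : Multiset ℕ) {n k j : ℕ} (hk : 1 ≤ k) (hkn : k ≤ n) :
    k ≤ ((Finset.Icc 1 n).filter (fun i => j ≤ cLen s i)).card ↔ j ≤ cLen s k := by
  constructor
  · intro h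
    by_contra hj
    push_neg at hj
    have hsub : ((Finset.Icc 1 n).filter (fun i => j ≤ cLen s i)) ⊆ Finset.Icc 1 (k-1) := by
      intro i hi
      simp only [Finset.mem_filter, Finset.mem_Icc] at hi ⊢
      refine ⟨hi.1.1, ?_⟩
      by_contra hik
      push_neg at hik
      have := cLen_antitone s (show k ≤ i by omega)
      omega
    have := Finset.card_le_card hsub
    rw [Nat.card_Icc] at this
    omega
  · intro h
    have hsub : Finset.Icc 1 k ⊆ ((Finset.Icc 1 n).filter (fun i => j ≤ cLen s i)) := by
      intro i hi
      simp only [Finset.mem_filter, Finset.mem_Icc] at hi ⊢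
      refine ⟨⟨hi.1, le_trans hi.2 hkn⟩, le_trans h (cLen_antitone s hi.2)⟩
    have := Finset.card_le_card hsub
    rw [Nat.card_Icc] at this
    omega

lemma cLen_count (u : Multiset ℕ) (m : ℕ) :
    cLen u m = Multiset.count m u + cLen u (m+1) := by
  unfold cLen
  induction u using Multiset.induction with
  | empty => simp
  | cons a t ih =>
    rw [Multiset.countP_cons, Multiset.countP_cons, Multiset.count_cons, ih]
    split_ifs <;> omega

lemma cLen_eq_zero (s : Multiset ℕ) {j : ℕ} (h : ∀ x ∈ s, x < j) : cLen s j = 0 := by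
  rw [cLen, Multiset.countP_eq_zero]
  intro a ha
  exact not_le.2 (h a ha)

lemma cLen_conjM_conjM (n : ℕ) (s : Multiset ℕ) (hle : ∀ x ∈ s, x ≤ n)
    (hcard : Multiset.card s ≤ n) {j : ℕ} (hj : 1 ≤ j) :
    cLen (conjM n (conjM n s)) j = cLen s j := by
  by_cases hjn : j ≤ n
  · rw [cLen_conjM n _ hj]
    have heq : ((Finset.Icc 1 n).filter (fun i => j ≤ cLen (conjM n s) i)) =
        Finset.Icc 1 (cLen s j) := by
      ext i
      simp only [Finset.mem_filter, Finset.mem_Icc]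
      constructor
      · rintro ⟨⟨h1, h2⟩, h3⟩
        rw [cLen_conjM n s h1] at h3
        exact ⟨h1, (galois s hj hjn).1 h3⟩
      · rintro ⟨h1, h2⟩
        have hi2 : i ≤ n := le_trans h2 (le_trans (cLen_le_card s j) hcard)
        refine ⟨⟨h1, hi2⟩, ?_⟩
        rw [cLen_conjM n s h1]
        exact (galois s hj hjn).2 h2
    rw [heq, Nat.card_Icc]
    omega
  · rw [cLen_eq_zero, cLen_eq_zero]
    · intro x hx; exact lt_of_le_of_lt (hle x hx) (by omega)
    · intro x hx
      have hx' : x ∈ ((Finset.Icc 1 n).val.map (cLen (conjM n s))) :=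
        Multiset.mem_of_le (Multiset.filter_le _ _) hx
      obtain ⟨i, _, rfl⟩ := Multiset.mem_map.1 hx'
      have := le_trans (cLen_le_card (conjM n s) i) (card_conjM_le n s)
      omega

lemma count_zero_conjM (n : ℕ) (s : Multiset ℕ) : Multiset.count 0 (conjM n s) = 0 := by
  rw [Multiset.count_eq_zero]
  intro h
  have := Multiset.of_mem_filter h
  omega

lemma conjM_conjM (n : ℕ) (s : Multiset ℕ) (hle : ∀ x ∈ s, x ≤ n)
    (hcard : Multiset.card s ≤ n) (h0 : 0 ∉ s) :
    conjM n (conjM n s) = s := by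
  ext a
  rcases Nat.eq_zero_or_pos a with rfl | ha
  · rw [count_zero_conjM, Multiset.count_eq_zero.2 h0]
  · have h1 := cLen_count (conjM n (conjM n s)) a
    have h2 := cLen_count s a
    rw [cLen_conjM_conjM n s hle hcard ha, cLen_conjM_conjM n s hle hcard (by omega)] at h1
    omega

lemma countP_odd_conjM (n : ℕ) (s : Multiset ℕ) :
    Multiset.countP (fun j => Odd j) (conjM n s) =
      ((Finset.Icc 1 n).filter (fun i => Odd (cLen s i))).card := by
  unfold conjM
  rw [Multiset.countP_filter]
  rw [Multiset.countP_congr rfl (fun a _ => show (Odd a ∧ 0 < a) = (Odd a) by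
    simp only [eq_iff_iff, and_iff_left_iff_imp]; exact fun h => h.pos)]
  rw [Multiset.countP_map]
  rfl

lemma sum_cLen (n : ℕ) (s : Multiset ℕ) (hle : ∀ x ∈ s, x ≤ n) :
    ∑ i ∈ Finset.Icc 1 n, cLen s i = s.sum := by
  induction s using Multiset.induction with
  | empty => simp [cLen]
  | cons a t ih =>
    have ha : a ≤ n := hle a (Multiset.mem_cons_self a t)
    have ht : ∀ x ∈ t, x ≤ n := fun x hx => hle x (Multiset.mem_cons_of_mem hx)
    simp only [cLen, Multiset.countP_cons, Multiset.sum_cons]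
    rw [Finset.sum_add_distrib, show ∑ x ∈ Finset.Icc 1 n, Multiset.countP (fun j => x ≤ j) t = t.sum from ih ht, Finset.sum_boole]
    have h2 : (Finset.Icc 1 n).filter (fun i => i ≤ a) = Finset.Icc 1 a := by
      ext i; simp only [Finset.mem_filter, Finset.mem_Icc]; omega
    rw [h2, Nat.card_Icc]
    simp only [Nat.cast_id]
    omega

lemma sum_conjM (n : ℕ) (s : Multiset ℕ) (hle : ∀ x ∈ s, x ≤ n) :
    (conjM n s).sum = s.sum := by
  have hfil : ∀ t : Multiset ℕ, (t.filter (fun x => 0 < x)).sum = t.sum := by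
    intro t
    induction t using Multiset.induction with
    | empty => simp
    | cons a u ih =>
      rcases Nat.eq_zero_or_pos a with rfl | haa
      · simp [Multiset.filter_cons, ih]
      · simp [Multiset.filter_cons, haa, ih]
  unfold conjM
  rw [hfil]
  have h1 : ((Finset.Icc 1 n).val.map (cLen s)).sum = ∑ i ∈ Finset.Icc 1 n, cLen s i := rfl
  rw [h1]
  exact sum_cLen n s hle

lemma even_card_invol {α : Type*} [DecidableEq α] (S : Finset α) (f : α → α)
    (hmem : ∀ a ∈ S, f a ∈ S) (hinv : ∀ a ∈ S, f (f a) = a)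
    (hne : ∀ a ∈ S, f a ≠ a) : Even S.card := by
  induction S using Finset.strongInduction with
  | _ S ih =>
    rcases Finset.eq_empty_or_nonempty S with rfl | ⟨a, ha⟩
    · simp
    · set T := S \ {a, f a} with hT
      have hfa : f a ∈ S := hmem a ha
      have hane : f a ≠ a := hne a ha
      have hTss : T ⊂ S := by
        refine Finset.ssubset_iff_of_subset (Finset.sdiff_subset) |>.2 ⟨a, ha, ?_⟩
        simp [hT]
      have hTmem : ∀ b ∈ T, f b ∈ T := by
        intro b hb
        rw [hT, Finset.mem_sdiff] at hb ⊢
        obtain ⟨hbS, hb2⟩ := hb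
        refine ⟨hmem b hbS, ?_⟩
        intro hmemp
        simp only [Finset.mem_insert, Finset.mem_singleton] at hmemp hb2
        rcases hmemp with h | h
        · exact hb2 (Or.inr (by rw [← h, hinv b hbS]))
        · exact hb2 (Or.inl (by rw [← hinv b hbS, h, hinv a ha]))
      have hcardT : Even T.card := by
        refine ih T hTss hTmem ?_ ?_
        · intro b hb; exact hinv b (Finset.mem_sdiff.1 hb).1
        · intro b hb; exact hne b (Finset.mem_sdiff.1 hb).1
      have hpair : ({a, f a} : Finset α) ⊆ S := by
        intro x hx
        simp only [Finset.mem_insert, Finset.mem_singleton] at hx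
        rcases hx with rfl | rfl
        · exact ha
        · exact hfa
      have hcardS : S.card = T.card + 2 := by
        rw [hT, Finset.card_sdiff_of_subset hpair, Finset.card_pair (Ne.symm hane)]
        have := Finset.card_le_card hpair
        rw [Finset.card_pair (Ne.symm hane)] at this
        omega
      rw [hcardS]
      exact hcardT.add (Even.add_self 1)

end Aux
namespace AndrewsStanley

lemma parts_le {n : ℕ} (π : n.Partition) : ∀ x ∈ π.parts, x ≤ n := fun x hx =>
  (Multiset.le_sum_of_mem hx).trans_eq π.parts_sum

lemma parts_card_le {n : ℕ} (π : n.Partition) : Multiset.card π.parts ≤ n := by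
  have h := Multiset.card_nsmul_le_sum (s := π.parts) (a := 1)
    (fun x hx => π.parts_pos hx)
  rw [smul_eq_mul, mul_one, π.parts_sum] at h
  exact h

/-- The conjugate partition. -/
def conjP {n : ℕ} (π : n.Partition) : n.Partition where
  parts := conjM n π.parts
  parts_pos := fun hi => Multiset.of_mem_filter hi
  parts_sum := by rw [sum_conjM n π.parts (parts_le π), π.parts_sum]

lemma conjP_conjP {n : ℕ} (π : n.Partition) : conjP (conjP π) = π := by
  have h0 : 0 ∉ π.parts := fun h => lt_irrefl 0 (π.parts_pos h)
  apply Nat.Partition.ext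
  exact conjM_conjM n π.parts (parts_le π) (parts_card_le π) h0

lemma colLen_eq {n : ℕ} (π : n.Partition) (i : ℕ) : colLen π i = cLen π.parts i :=
  (Multiset.countP_eq_card_filter _ _).symm

lemma numOdd_conjP {n : ℕ} (π : n.Partition) : numOdd (conjP π) = numOddConj π := by
  unfold numOdd numOddConj
  rw [← Multiset.countP_eq_card_filter]
  show Multiset.countP (fun j => Odd j) (conjM n π.parts) = _
  rw [countP_odd_conjM]
  congr 1
  ext i
  simp [colLen_eq]

lemma srank_conjP {n : ℕ} (π : n.Partition) : srank (conjP π) = - srank π := by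
  have h1 := numOdd_conjP π
  have h2 := numOdd_conjP (conjP π)
  rw [conjP_conjP] at h2
  unfold srank
  rw [h1, ← h2]
  ring

/-- `p_2(n)` is even for all `n ≥ 0`. -/
theorem p2_even (n : ℕ) : Even (pMod 2 n) := by
  unfold pMod
  apply even_card_invol _ conjP
  · intro π hπ
    simp only [Finset.mem_filter, Finset.mem_univ, true_and] at hπ ⊢
    rw [srank_conjP]
    omega
  · intro π _
    exact conjP_conjP π
  · intro π hπ
    simp only [Finset.mem_filter, Finset.mem_univ, true_and] at hπ
    intro h
    have := srank_conjP π
    rw [h] at this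
    omega

end AndrewsStanley
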